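/- For a measurable set A ⊆ ℝ^d and η ∼ N(0, σ²I), the map x ↦ P(x + η ∈ A) is Lipschitz after composing with Φ⁻¹: specifically, for any x, x′, Φ⁻¹(P(x+η ∈ A)) ≥ Φ⁻¹(P(x′+η ∈ A)) − ‖x−x′‖₂/σ, provided both probabilities lie in (0,1). -/

import Mathlib

open MeasureTheory

open ENNReal ProbabilityTheory

lemma map_withDensity_equiv {α β : Type*} [MeasurableSpace α] [MeasurableSpace β]
    (e : α ≃ᵐ β) (μ : Measure α) (f : β → ℝ≥0∞) (hf : Measurable f) :
    (μ.withDensity (f ∘ e)).map e = (μ.map e).withDensity f := by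
  ext s hs
  rw [MeasurableEquiv.map_apply, withDensity_apply _ (e.measurable hs),
    withDensity_apply _ hs, setLIntegral_map hs hf e.measurable]
  rfl

lemma prod_withDensity_ofReal {α β : Type*} [MeasurableSpace α] [MeasurableSpace β]
    (μ : Measure α) (ν : Measure β) [SigmaFinite μ] [SigmaFinite ν]
    (f : α → ℝ) (g : β → ℝ) (hf : Measurable f) (hg : Measurable g) :
    (μ.withDensity (fun a => ENNReal.ofReal (f a))).prod
      (ν.withDensity (fun b => ENNReal.ofReal (g b))) =
    (μ.prod ν).withDensity (fun p => ENNReal.ofReal (f p.1) * ENNReal.ofReal (g p.2)) := by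
  refine Measure.prod_eq (μ := μ.withDensity (fun a => ENNReal.ofReal (f a)))
    (ν := ν.withDensity (fun b => ENNReal.ofReal (g b))) fun s t hs ht => ?_
  rw [withDensity_apply _ (hs.prod ht), ← Measure.prod_restrict,
    lintegral_prod_mul (hf.ennreal_ofReal.aemeasurable) (hg.ennreal_ofReal.aemeasurable),
    withDensity_apply _ hs, withDensity_apply _ ht]

lemma pi_withDensity_ofReal : ∀ (n : ℕ) (f : Fin n → ℝ → ℝ), (∀ i, Measurable (f i)) →
    (∀ i t, 0 ≤ f i t) →
    Measure.pi (fun i => (volume : Measure ℝ).withDensity (fun t => ENNReal.ofReal (f i t))) =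
    (volume : Measure (Fin n → ℝ)).withDensity (fun w => ENNReal.ofReal (∏ i, f i (w i)))
  | 0, f, hf, h0 => by
    simp only [Finset.univ_eq_empty, Finset.prod_empty, ENNReal.ofReal_one]
    rw [show (fun _ : Fin 0 → ℝ => (1 : ENNReal)) = 1 from rfl, withDensity_one, volume_pi]
    congr 1
    funext i
    exact i.elim0
  | (n+1), f, hf, h0 => by
    set e := MeasurableEquiv.piFinSuccAbove (fun _ : Fin (n+1) => ℝ) 0 with he
    have key := measurePreserving_piFinSuccAbove
      (fun i : Fin (n+1) => (volume : Measure ℝ).withDensity (fun t => ENNReal.ofReal (f i t))) 0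
    have h1 : Measure.pi (fun i : Fin (n+1) =>
        (volume : Measure ℝ).withDensity (fun t => ENNReal.ofReal (f i t))) =
        Measure.map e.symm (((volume : Measure ℝ).withDensity
            (fun t => ENNReal.ofReal (f 0 t))).prod
          (Measure.pi (fun j : Fin n => (volume : Measure ℝ).withDensity
            (fun t => ENNReal.ofReal (f ((0 : Fin (n+1)).succAbove j) t))))) :=
      (key.symm e).map_eq.symm
    have h3 := prod_withDensity_ofReal (volume : Measure ℝ) (volume : Measure (Fin n → ℝ))
      (f 0) (fun w : Fin n → ℝ => ∏ j, f ((0 : Fin (n+1)).succAbove j) (w j)) (hf 0)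
      (Finset.measurable_prod _ (fun j _ => (hf _).comp (measurable_pi_apply j)))
    rw [h1, pi_withDensity_ofReal n (fun j => f ((0 : Fin (n+1)).succAbove j))
        (fun j => hf _) (fun j => h0 _), h3]
    have h2 : ∀ p : ℝ × (Fin n → ℝ),
        ((fun w : Fin (n+1) → ℝ => ENNReal.ofReal (∏ i, f i (w i))) ∘ e.symm) p =
        ENNReal.ofReal (f 0 p.1) *
          ENNReal.ofReal (∏ j, f ((0 : Fin (n+1)).succAbove j) (p.2 j)) := by
      intro p
      have : ∏ i, f i (e.symm p i) =
          f 0 p.1 * ∏ j, f ((0 : Fin (n+1)).succAbove j) (p.2 j) := by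
        rw [Fin.prod_univ_succ]
        simp [he, MeasurableEquiv.piFinSuccAbove, Fin.zero_succAbove, Fin.insertNth_apply_same,
          Fin.insertNth_apply_succAbove]
      simp only [Function.comp_apply]
      rw [this, ENNReal.ofReal_mul (h0 0 p.1)]
    have hm : Measurable (fun w : Fin (n+1) → ℝ => ∏ i, f i (w i)) :=
      Finset.measurable_prod Finset.univ (fun i _ => (hf i).comp (measurable_pi_apply i))
    rw [← funext h2, map_withDensity_equiv e.symm ((volume : Measure ℝ).prod volume)
        (fun w : Fin (n+1) → ℝ => ENNReal.ofReal (∏ i, f i (w i))) hm.ennreal_ofReal]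
    congr 1
    have := (volume_preserving_piFinSuccAbove (fun _ : Fin (n+1) => ℝ) 0).symm e
    rw [← this.map_eq]
    rfl

lemma pi_gaussian_eq_withDensity {k : ℕ} (m : Fin k → ℝ) (v2 : NNReal) (hv2 : v2 ≠ 0) :
    Measure.pi (fun i => gaussianReal (m i) v2) =
    (volume : Measure (Fin k → ℝ)).withDensity
      (fun w => ENNReal.ofReal (∏ i, gaussianPDFReal (m i) v2 (w i))) := by
  have : ∀ i : Fin k, gaussianReal (m i) v2 =
      (volume : Measure ℝ).withDensity (fun t => ENNReal.ofReal (gaussianPDFReal (m i) v2 t)) := by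
    intro i
    rw [gaussianReal_of_var_ne_zero _ hv2, gaussianPDF_def]
  rw [funext this, pi_withDensity_ofReal k (fun i => gaussianPDFReal (m i) v2)
    (fun i => measurable_gaussianPDFReal _ _) (fun i t => gaussianPDFReal_nonneg _ _ _)]

lemma map_eval_pi {k : ℕ} (μ : Measure ℝ) [IsProbabilityMeasure μ] (i0 : Fin k) :
    Measure.map (Function.eval i0) (Measure.pi fun _ : Fin k => μ) = μ := by
  ext s hs
  rw [Measure.map_apply (measurable_pi_apply i0) hs, Set.eval_preimage, Measure.pi_pi]
  rw [Finset.prod_eq_single i0 (fun j _ hj => by simp [Function.update_of_ne hj])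
    (fun h => absurd (Finset.mem_univ i0) h)]
  simp

lemma map_linear_pi_gaussian (d : ℕ) (v2 : NNReal) (hv2 : v2 ≠ 0) (u : Fin d → ℝ)
    (hu : ∑ i, u i ^ 2 = 1) :
    Measure.map (fun w : Fin d → ℝ => ∑ i, u i * w i)
      (Measure.pi fun _ : Fin d => gaussianReal 0 v2) = gaussianReal 0 v2 := by
  classical
  have hd : 0 < d := by
    rcases Nat.eq_zero_or_pos d with h | h
    · subst h; simp at hu
    · exact h
  set i0 : Fin d := ⟨0, hd⟩
  set E := EuclideanSpace ℝ (Fin d) with hE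
  set eE : E ≃ᵐ (Fin d → ℝ) := (MeasurableEquiv.toLp 2 (Fin d → ℝ)).symm with heE
  set uE : E := (EuclideanSpace.equiv (Fin d) ℝ).symm u with huE
  have huE_apply : ∀ i, uE i = u i := fun i => rfl
  have heE_apply : ∀ (z : E) i, eE z i = z i := fun z i => rfl
  have heE_symm_apply : ∀ (w : Fin d → ℝ) i, (eE.symm w) i = w i := fun w i => rfl
  have hnorm_sq : ∀ z : E, ‖z‖ ^ 2 = ∑ i, z i ^ 2 := by
    intro z
    rw [EuclideanSpace.norm_eq, Real.sq_sqrt (Finset.sum_nonneg fun i _ => sq_nonneg _)]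
    simp [sq_abs]
  have hunorm : ‖uE‖ = 1 := by
    have : ‖uE‖ ^ 2 = 1 := by rw [hnorm_sq]; simpa [huE_apply] using hu
    nlinarith [norm_nonneg uE]
  -- orthonormal basis extension
  have hon : Orthonormal ℝ (({i0} : Set (Fin d)).restrict (fun _ : Fin d => uE)) := by
    constructor
    · intro i; exact hunorm
    · intro i j hij
      exact absurd (Subtype.ext ((Set.mem_singleton_iff.mp i.2).trans
        (Set.mem_singleton_iff.mp j.2).symm)) hij
  have hcard : Module.finrank ℝ E = Fintype.card (Fin d) := by
    rw [Fintype.card_fin]; exact finrank_euclideanSpace_fin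
  obtain ⟨b, hb⟩ := hon.exists_orthonormalBasis_extension_of_card_eq hcard
  have hb0 : b i0 = uE := hb i0 rfl
  set R : E ≃ᵐ E := (b.repr : E ≃ₗᵢ[ℝ] EuclideanSpace ℝ (Fin d)).toMeasurableEquiv with hR
  -- key pointwise identity
  have hkey : ∀ w : Fin d → ℝ, (∑ i, u i * w i) = b.repr (eE.symm w) i0 := by
    intro w
    rw [b.repr_apply_apply, hb0]
    rw [PiLp.inner_apply]
    simp only [RCLike.inner_apply, conj_trivial]
    exact Finset.sum_congr rfl fun i _ => mul_comm _ _
  -- densities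
  set c : ℝ := ((Real.sqrt (2 * Real.pi * v2))⁻¹) ^ d with hc
  set N : E → ℝ := fun z => c * Real.exp (-‖z‖ ^ 2 / (2 * v2)) with hN
  have hNmeas : Measurable N := by
    apply Measurable.const_mul
    exact (measurable_norm.pow_const 2).neg.div_const _ |>.exp
  have hNF : ∀ z : E, ∏ i, gaussianPDFReal 0 v2 (eE z i) = N z := by
    intro z
    simp only [gaussianPDFReal, sub_zero, heE_apply]
    rw [Finset.prod_mul_distrib, Finset.prod_const, Finset.card_univ, Fintype.card_fin,
      ← Real.exp_sum]
    have hsum : ∑ x, (-z x ^ 2 / (2 * (v2 : ℝ))) = -‖z‖ ^ 2 / (2 * (v2 : ℝ)) := by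
      rw [hnorm_sq z, ← Finset.sum_div, Finset.sum_neg_distrib, neg_div]
    rw [hsum]
  set γ : Measure (Fin d → ℝ) := Measure.pi fun _ : Fin d => gaussianReal 0 v2 with hγ
  have hγwd : γ = (volume : Measure (Fin d → ℝ)).withDensity
      (fun w => ENNReal.ofReal (∏ i, gaussianPDFReal 0 v2 (w i))) :=
    pi_gaussian_eq_withDensity (fun _ => (0 : ℝ)) v2 hv2
  set γE : Measure E := (volume : Measure E).withDensity (fun z => ENNReal.ofReal (N z)) with hγE
  have claim1 : Measure.map eE γE = γ := by
    have hcomp : ((fun w : Fin d → ℝ => ENNReal.ofReal (∏ i, gaussianPDFReal 0 v2 (w i))) ∘ eE)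
        = fun z => ENNReal.ofReal (N z) := by
      funext z
      simp only [Function.comp_apply]
      rw [← hNF z]
    have := map_withDensity_equiv eE (volume : Measure E)
      (fun w : Fin d → ℝ => ENNReal.ofReal (∏ i, gaussianPDFReal 0 v2 (w i)))
      ((Finset.measurable_prod Finset.univ (fun i _ =>
        (measurable_gaussianPDFReal 0 v2).comp (measurable_pi_apply i))).ennreal_ofReal)
    rw [hcomp] at this
    rw [hγE, this, (EuclideanSpace.volume_preserving_symm_measurableEquiv_toLp (Fin d)).map_eq, hγwd]
  have claim1' : Measure.map eE.symm γ = γE := by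
    rw [← claim1, Measure.map_map eE.symm.measurable eE.measurable]
    simp
  have claim2 : Measure.map R γE = γE := by
    have hcomp : ((fun z : E => ENNReal.ofReal (N z)) ∘ R) = fun z => ENNReal.ofReal (N z) := by
      funext z
      simp only [Function.comp_apply, hN]
      rw [LinearIsometryEquiv.coe_toMeasurableEquiv, b.repr.norm_map]
    have := map_withDensity_equiv R (volume : Measure E)
      (fun z : E => ENNReal.ofReal (N z)) hNmeas.ennreal_ofReal
    rw [hcomp] at this
    rw [hγE, this]
    congr 1
    rw [LinearIsometryEquiv.coe_toMeasurableEquiv]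
    exact b.repr.measurePreserving.map_eq
  have claim3 : Measure.map (fun z : E => z i0) γE = gaussianReal 0 v2 := by
    have : (fun z : E => z i0) = (Function.eval i0) ∘ eE := rfl
    rw [this, ← Measure.map_map (measurable_pi_apply i0) eE.measurable, claim1, hγ,
      map_eval_pi]
  -- assemble
  have hLdecomp : (fun w : Fin d → ℝ => ∑ i, u i * w i)
      = (fun z : E => z i0) ∘ (⇑R ∘ ⇑eE.symm) := by
    funext w
    simp only [Function.comp_apply, hR, LinearIsometryEquiv.coe_toMeasurableEquiv]
    exact hkey w
  have hev : Measurable fun z : E => z i0 :=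
    (measurable_pi_apply i0).comp (WithLp.measurable_ofLp 2 _)
  rw [hLdecomp, ← Measure.map_map hev (R.measurable.comp eE.symm.measurable),
    ← Measure.map_map R.measurable eE.symm.measurable, claim1', claim2, claim3]

/-- The standard Gaussian cumulative distribution function Φ. -/
noncomputable def stdGaussianCDF (t : ℝ) : ℝ :=
  ((ProbabilityTheory.gaussianReal 0 1) (Set.Iic t)).toReal

lemma gaussianReal_sigma_sq (σ : NNReal) (hσ : 0 < σ) :
    gaussianReal 0 (σ ^ 2) = Measure.map (fun y => (σ : ℝ) * y) (gaussianReal 0 1) := by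
  rw [gaussianReal_map_const_mul]
  congr 1
  · simp
  · ext
    push_cast
    ring

lemma gaussianReal_Iic_toReal (σ : NNReal) (hσ : 0 < σ) (t : ℝ) :
    ((gaussianReal 0 (σ ^ 2)) (Set.Iic t)).toReal = stdGaussianCDF (t / σ) := by
  have hσR : (0 : ℝ) < σ := hσ
  rw [gaussianReal_sigma_sq σ hσ,
    Measure.map_apply (measurable_const_mul _) measurableSet_Iic]
  have : (fun y : ℝ => (σ : ℝ) * y) ⁻¹' Set.Iic t = Set.Iic (t / σ) := by
    ext y
    simp only [Set.mem_preimage, Set.mem_Iic]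
    rw [mul_comm, ← le_div_iff₀ hσR]
  rw [this, stdGaussianCDF]

lemma stdGaussianCDF_strictMono : StrictMono stdGaussianCDF := by
  intro a b hab
  have h0 : gaussianReal 0 1 (Set.Ioc a b) ≠ 0 := by
    intro h
    have := (gaussianReal_absolutelyContinuous' 0 one_ne_zero) h
    rw [Real.volume_Ioc] at this
    simp only [ENNReal.ofReal_eq_zero, sub_nonpos] at this
    exact absurd this (not_le.mpr hab)
  have hlt : gaussianReal 0 1 (Set.Iic a) < gaussianReal 0 1 (Set.Iic b) := by
    have hunion : Set.Iic a ∪ Set.Ioc a b = Set.Iic b := Set.Iic_union_Ioc_eq_Iic hab.le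
    have hdisj : Disjoint (Set.Iic a) (Set.Ioc a b) := by
      apply Set.disjoint_left.mpr
      intro y hy hy'
      exact absurd hy'.1 (not_lt.mpr hy)
    rw [← hunion, measure_union hdisj measurableSet_Ioc]
    exact ENNReal.lt_add_right (measure_ne_top _ _) h0
  exact ENNReal.toReal_lt_toReal (measure_ne_top _ _) (measure_ne_top _ _) |>.mpr hlt

theorem gaussian_shift_inequality {d : ℕ} (Φinv : ℝ → ℝ)
    (hinv : ∀ p ∈ Set.Ioo (0 : ℝ) 1, stdGaussianCDF (Φinv p) = p)
    (hinv' : ∀ t : ℝ, Φinv (stdGaussianCDF t) = t)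
    (σ : NNReal) (hσ : 0 < σ)
    (A : Set (Fin d → ℝ)) (hA : MeasurableSet A)
    (x x' : Fin d → ℝ)
    (hx : ((Measure.pi fun _ : Fin d => ProbabilityTheory.gaussianReal 0 (σ ^ 2))
            {w | x + w ∈ A}).toReal ∈ Set.Ioo (0 : ℝ) 1)
    (hx' : ((Measure.pi fun _ : Fin d => ProbabilityTheory.gaussianReal 0 (σ ^ 2))
            {w | x' + w ∈ A}).toReal ∈ Set.Ioo (0 : ℝ) 1) :
    Φinv (((Measure.pi fun _ : Fin d => ProbabilityTheory.gaussianReal 0 (σ ^ 2))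
            {w | x + w ∈ A}).toReal) ≥
      Φinv (((Measure.pi fun _ : Fin d => ProbabilityTheory.gaussianReal 0 (σ ^ 2))
            {w | x' + w ∈ A}).toReal) -
        Real.sqrt (∑ i, (x i - x' i) ^ 2) / σ := by
  classical
  by_cases hxx : x = x'
  · subst hxx
    simp
  have hσR : (0 : ℝ) < σ := hσ
  set v2 : NNReal := σ ^ 2 with hv2def
  have hv2 : v2 ≠ 0 := pow_ne_zero 2 hσ.ne'
  have hv2R : (0 : ℝ) < (v2 : ℝ) := by positivity
  set γ : Measure (Fin d → ℝ) := Measure.pi fun _ : Fin d => gaussianReal 0 v2 with hγdef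
  -- the direction vector
  set vv : Fin d → ℝ := fun i => x i - x' i with hvv
  have hr2pos : 0 < ∑ i, vv i ^ 2 := by
    obtain ⟨i, hi⟩ := Function.ne_iff.mp hxx
    refine Finset.sum_pos' (fun j _ => sq_nonneg _) ⟨i, Finset.mem_univ i, ?_⟩
    have : vv i ≠ 0 := sub_ne_zero.mpr hi
    positivity
  have hsum_eq : ∑ i, (x i - x' i) ^ 2 = ∑ i, vv i ^ 2 := rfl
  rw [hsum_eq]
  set r : ℝ := Real.sqrt (∑ i, vv i ^ 2) with hrdef
  have hrpos : 0 < r := Real.sqrt_pos.mpr hr2pos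
  have hr2 : r ^ 2 = ∑ i, vv i ^ 2 := Real.sq_sqrt hr2pos.le
  set u : Fin d → ℝ := fun i => vv i / r with hu_def
  have hu : ∑ i, u i ^ 2 = 1 := by
    simp only [hu_def, div_pow, ← Finset.sum_div, ← hr2]
    exact div_self (by positivity)
  set L : (Fin d → ℝ) → ℝ := fun w => ∑ i, u i * w i with hLdef
  have hLmeas : Measurable L :=
    Finset.measurable_sum _ (fun i _ => (measurable_pi_apply i).const_mul _)
  have hmapL : Measure.map L γ = gaussianReal 0 v2 := map_linear_pi_gaussian d v2 hv2 u hu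
  have hLv : ∑ i, u i * vv i = r := by
    have : ∀ i, u i * vv i = vv i ^ 2 / r := by
      intro i; rw [hu_def]; ring
    rw [Finset.sum_congr rfl fun i _ => this i, ← Finset.sum_div, ← hr2]
    field_simp
  -- density of γ
  set g : (Fin d → ℝ) → ℝ := fun w => ∏ i, gaussianPDFReal 0 v2 (w i) with hgdef
  have hgmeas : Measurable g :=
    Finset.measurable_prod _ (fun i _ => (measurable_gaussianPDFReal _ _).comp
      (measurable_pi_apply i))
  have hgnonneg : ∀ w, 0 ≤ g w :=
    fun w => Finset.prod_nonneg fun i _ => gaussianPDFReal_nonneg _ _ _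
  have hγwd : γ = (volume : Measure (Fin d → ℝ)).withDensity
      (fun w => ENNReal.ofReal (g w)) := pi_gaussian_eq_withDensity (fun _ => (0 : ℝ)) v2 hv2
  have hint_g : Integrable g (volume : Measure (Fin d → ℝ)) := by
    refine ⟨hgmeas.aestronglyMeasurable, ?_⟩
    rw [hasFiniteIntegral_iff_ofReal (ae_of_all _ hgnonneg)]
    have : ∫⁻ w, ENNReal.ofReal (g w) = γ Set.univ := by
      rw [hγwd, withDensity_apply _ MeasurableSet.univ, Measure.restrict_univ]
    rw [this, measure_univ]
    exact ENNReal.one_lt_top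
  have hP : ∀ S : Set (Fin d → ℝ), MeasurableSet S → (γ S).toReal = ∫ w in S, g w := by
    intro S hS
    rw [hγwd, withDensity_apply _ hS,
      ← ofReal_integral_eq_lintegral_ofReal hint_g.integrableOn
        (ae_restrict_of_ae (ae_of_all _ hgnonneg)),
      ENNReal.toReal_ofReal (setIntegral_nonneg hS fun w _ => hgnonneg w)]
  -- translated density
  set h : (Fin d → ℝ) → ℝ := fun w => g (w + vv) with hhdef
  have hsubmeas : Measurable (fun w : Fin d → ℝ => w - vv) :=
    measurable_id.sub measurable_const
  have hmp : MeasurePreserving (fun w : Fin d → ℝ => w + vv) volume volume :=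
    measurePreserving_add_right volume vv
  have hint_h : Integrable h (volume : Measure (Fin d → ℝ)) :=
    (hmp.integrable_comp hint_g.aestronglyMeasurable).mpr hint_g
  have hQ : ∀ S : Set (Fin d → ℝ), MeasurableSet S →
      (γ ((fun w => w - vv) ⁻¹' S)).toReal = ∫ w in S, h w := by
    intro S hS
    rw [hP _ (hS.preimage hsubmeas), ← integral_indicator (hS.preimage hsubmeas),
      ← integral_indicator hS]
    have := hmp.integral_comp (MeasurableEquiv.addRight vv).measurableEmbedding
      (((fun w => w - vv) ⁻¹' S).indicator g)
    rw [← this]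
    congr 1
    funext w
    by_cases hw : w ∈ S <;>
      simp [Set.indicator, hw, hhdef]
  -- the sets
  set B : Set (Fin d → ℝ) := {w | x + w ∈ A} with hBdef
  have hB : MeasurableSet B := hA.preimage (measurable_const.add measurable_id)
  set B' : Set (Fin d → ℝ) := {w | x' + w ∈ A} with hB'def
  have hB'm : MeasurableSet B' := hA.preimage (measurable_const.add measurable_id)
  have hB' : B' = (fun w => w - vv) ⁻¹' B := by
    ext w
    have : x' + w = x + (w - vv) := by
      funext i
      simp only [Pi.add_apply, Pi.sub_apply, hvv]
      ring
    simp only [hB'def, hBdef, Set.mem_preimage, Set.mem_setOf_eq, this]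
  set p' : ℝ := (γ B').toReal with hp'def
  set β : ℝ := Φinv p' with hβdef
  have hβ : stdGaussianCDF β = p' := hinv p' hx'
  set cc : ℝ := (σ : ℝ) * β - r with hccdef
  set H : Set (Fin d → ℝ) := L ⁻¹' (Set.Iic cc) with hHdef
  have hH : MeasurableSet H := hLmeas measurableSet_Iic
  have hmapL_Iic : ∀ t : ℝ, (γ (L ⁻¹' Set.Iic t)).toReal = stdGaussianCDF (t / σ) := by
    intro t
    rw [← Measure.map_apply hLmeas measurableSet_Iic, hmapL, hv2def,
      gaussianReal_Iic_toReal σ hσ]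
  have hγH : (γ H).toReal = stdGaussianCDF (β - r / σ) := by
    rw [hHdef, hmapL_Iic cc]
    congr 1
    rw [hccdef]
    field_simp
  have hγH' : (γ ((fun w => w - vv) ⁻¹' H)).toReal = p' := by
    have hLsub : ∀ w, L (w - vv) = L w - r := by
      intro w
      simp only [hLdef, Pi.sub_apply, mul_sub, Finset.sum_sub_distrib, hLv]
    have : (fun w => w - vv) ⁻¹' H = L ⁻¹' Set.Iic (cc + r) := by
      ext w
      simp only [Set.mem_preimage, hHdef, Set.mem_Iic, hLsub w]
      constructor <;> intro hw <;> linarith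
    rw [this, hmapL_Iic]
    have : (cc + r) / σ = β := by rw [hccdef]; field_simp; ring
    rw [this, hβ]
  -- pointwise density relation
  have hgh : ∀ w, g w = h w * Real.exp ((2 * r * L w + r ^ 2) / (2 * (v2 : ℝ))) := by
    intro w
    have hfac : ∀ i, gaussianPDFReal 0 v2 (w i + vv i) =
        gaussianPDFReal 0 v2 (w i) *
          Real.exp (-(2 * (w i * vv i) + vv i ^ 2) / (2 * (v2 : ℝ))) := by
      intro i
      simp only [gaussianPDFReal, sub_zero]
      conv_rhs => rw [mul_assoc, ← Real.exp_add]
      congr 1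
      field_simp
      ring
    have hh : h w = g w * Real.exp (-(2 * r * L w + r ^ 2) / (2 * (v2 : ℝ))) := by
      simp only [hhdef, hgdef, Pi.add_apply]
      rw [Finset.prod_congr rfl fun i _ => hfac i, Finset.prod_mul_distrib, ← Real.exp_sum]
      congr 1
      have h1 : ∑ i, w i * vv i = r * L w := by
        rw [hLdef, Finset.mul_sum]
        refine Finset.sum_congr rfl fun i _ => ?_
        rw [hu_def]
        field_simp
      have hsum2 : ∑ i, (2 * (w i * vv i) + vv i ^ 2) = 2 * r * L w + r ^ 2 := by
        rw [Finset.sum_add_distrib, ← Finset.mul_sum, h1, ← hr2]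
        ring
      rw [← Finset.sum_div, Finset.sum_neg_distrib, hsum2]
    rw [hh, mul_assoc, ← Real.exp_add, neg_div, neg_add_cancel, Real.exp_zero, mul_one]
  have hhnonneg : ∀ w, 0 ≤ h w := fun w => hgnonneg _
  set k : ℝ := Real.exp ((2 * r * cc + r ^ 2) / (2 * (v2 : ℝ))) with hkdef
  -- pointwise Neyman–Pearson inequality
  have hpt : ∀ w, k * (B.indicator h w - H.indicator h w) ≤
      B.indicator g w - H.indicator g w := by
    intro w
    have hexp_mono : ∀ {a b₁ : ℝ}, b₁ ≤ a →
        Real.exp ((2 * r * b₁ + r ^ 2) / (2 * (v2 : ℝ))) ≤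
        Real.exp ((2 * r * a + r ^ 2) / (2 * (v2 : ℝ))) := by
      intro a b₁ hab
      apply Real.exp_le_exp.mpr
      gcongr
    by_cases hwB : w ∈ B <;> by_cases hwH : w ∈ H
    · simp [Set.indicator_of_mem, hwB, hwH]
    · have hLw : cc ≤ L w := le_of_not_ge (by simpa [hHdef] using hwH)
      simp only [Set.indicator_of_mem hwB, Set.indicator_of_notMem hwH, sub_zero]
      rw [hgh w, mul_comm k (h w)]
      exact mul_le_mul_of_nonneg_left (hexp_mono hLw) (hhnonneg w)
    · have hLw : L w ≤ cc := by simpa [hHdef] using hwH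
      simp only [Set.indicator_of_notMem hwB, Set.indicator_of_mem hwH, zero_sub,
        mul_neg, neg_le_neg_iff]
      rw [hgh w, mul_comm k (h w)]
      exact mul_le_mul_of_nonneg_left (hexp_mono hLw) (hhnonneg w)
    · simp [Set.indicator_of_notMem, hwB, hwH]
  -- integrate
  have hintBg := hint_g.indicator hB
  have hintHg := hint_g.indicator hH
  have hintBh := hint_h.indicator hB
  have hintHh := hint_h.indicator hH
  have hmono := integral_mono (((hintBh.sub hintHh).const_mul k)) (hintBg.sub hintHg) hpt
  simp only [Pi.sub_apply] at hmono
  rw [integral_const_mul, integral_sub hintBh hintHh, integral_sub hintBg hintHg,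
    integral_indicator hB, integral_indicator hH, integral_indicator hB,
    integral_indicator hH] at hmono
  have hBh : ∫ w in B, h w = p' := by rw [← hQ B hB, ← hB', hp'def]
  have hHh : ∫ w in H, h w = p' := by rw [← hQ H hH, hγH']
  rw [hBh, hHh, sub_self, mul_zero] at hmono
  have hmain : stdGaussianCDF (β - r / σ) ≤ (γ B).toReal := by
    have h1 := hP H hH
    rw [hγH] at h1
    rw [hP B hB, h1]
    linarith [hmono]
  -- conclude
  have hΦp : stdGaussianCDF (Φinv ((γ B).toReal)) = (γ B).toReal := hinv _ hx
  have : β - r / σ ≤ Φinv ((γ B).toReal) := by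
    apply stdGaussianCDF_strictMono.le_iff_le.mp
    rw [hΦp]
    exact hmain
  exact this
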